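/- Let P^{A,E} be a joint probability distribution on a product of finite sets A × E and let R < H(A|E), the conditional Shannon entropy of A given E. Then max_{0≤s≤1} ( H̃_{1+s}(A|E|P^{A,E}) − sR )/2 ≤ max_{0≤t≤1/2} ( −φ(t|P^{A,E}) − tR ). -/

import Mathlib

open Finset

/-- For a joint probability distribution `P` on `A × E` and `R < H(A|E)`, the exponent
`max_{0≤s≤1} (H̃_{1+s}(A|E|P^{A,E}) - sR)/2` is at most
`max_{0≤t≤1/2} (-φ(t|P^{A,E}) - tR)`. -/
theorem stmt_16 {A E : Type*} [Fintype A] [Fintype E]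
    (P : A → E → ℝ) (hP0 : ∀ a e, 0 ≤ P a e) (hP1 : ∑ a, ∑ e, P a e = 1)
    (R : ℝ)
    (hR : R < -∑ a, ∑ e, P a e * Real.log (P a e / (∑ a', P a' e))) :
    sSup ((fun s : ℝ =>
        (-Real.log (∑ e ∈ univ.filter (fun e => 0 < ∑ a', P a' e),
            ∑ a, P a e ^ (1 + s) * (∑ a', P a' e) ^ (-s)) - s * R) / 2) ''
        Set.Icc 0 1)
      ≤ sSup ((fun t : ℝ =>
          -Real.log (∑ e, (∑ a, P a e ^ (1 / (1 - t))) ^ (1 - t)) - t * R) ''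
        Set.Icc 0 (1 / 2)) := by
  classical
  obtain ⟨a0, e0, hpos⟩ : ∃ a e, 0 < P a e := by
    by_contra h
    push_neg at h
    have h0 : ∑ a, ∑ e, P a e = 0 :=
      Finset.sum_eq_zero fun a _ => Finset.sum_eq_zero fun e _ =>
        le_antisymm (h a e) (hP0 a e)
    linarith
  have hPE0 : ∀ e, 0 ≤ ∑ a', P a' e := fun e => Finset.sum_nonneg fun a _ => hP0 a e
  have hPEe0 : 0 < ∑ a', P a' e0 :=
    lt_of_lt_of_le hpos (Finset.single_le_sum (fun a _ => hP0 a e0) (mem_univ a0))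
  have hPEsum : ∑ e, ∑ a', P a' e = 1 := by rw [← hP1]; exact Finset.sum_comm
  -- lower bound for the φ-sum
  have hG_lb : ∀ t : ℝ, 0 ≤ t → t ≤ 1 / 2 →
      P a0 e0 ≤ ∑ e, (∑ a, P a e ^ (1 / (1 - t))) ^ (1 - t) := by
    intro t ht0 ht2
    have h1t : (0 : ℝ) < 1 - t := by linarith
    have h1 : P a0 e0 = (P a0 e0 ^ (1 / (1 - t))) ^ (1 - t) := by
      rw [← Real.rpow_mul (hP0 a0 e0), one_div_mul_cancel h1t.ne', Real.rpow_one]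
    calc P a0 e0 = (P a0 e0 ^ (1 / (1 - t))) ^ (1 - t) := h1
      _ ≤ (∑ a, P a e0 ^ (1 / (1 - t))) ^ (1 - t) := by
          apply Real.rpow_le_rpow (Real.rpow_nonneg (hP0 a0 e0) _)
            (Finset.single_le_sum (fun a _ => Real.rpow_nonneg (hP0 a e0) _) (mem_univ a0)) h1t.le
      _ ≤ ∑ e, (∑ a, P a e ^ (1 / (1 - t))) ^ (1 - t) := by
          apply Finset.single_le_sum (fun e _ => Real.rpow_nonneg
            (Finset.sum_nonneg fun a _ => Real.rpow_nonneg (hP0 a e) _) _) (mem_univ e0)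
  -- boundedness of the RHS set
  have hBdd : BddAbove ((fun t : ℝ =>
      -Real.log (∑ e, (∑ a, P a e ^ (1 / (1 - t))) ^ (1 - t)) - t * R) ''
      Set.Icc 0 (1 / 2)) := by
    refine ⟨-Real.log (P a0 e0) + |R|, ?_⟩
    rintro x ⟨t, ⟨ht0, ht2⟩, rfl⟩
    have h1 : Real.log (P a0 e0) ≤
        Real.log (∑ e, (∑ a, P a e ^ (1 / (1 - t))) ^ (1 - t)) :=
      Real.log_le_log hpos (hG_lb t ht0 ht2)
    have h2 : -(t * R) ≤ |R| := by
      calc -(t * R) ≤ |t * R| := neg_le_abs _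
        _ = t * |R| := by rw [abs_mul, abs_of_nonneg ht0]
        _ ≤ |R| := by nlinarith [abs_nonneg R]
    simp only
    linarith
  -- the RHS sSup is nonneg (value at t = 0 is 0)
  have hval0 : (fun t : ℝ =>
      -Real.log (∑ e, (∑ a, P a e ^ (1 / (1 - t))) ^ (1 - t)) - t * R) 0 = 0 := by
    norm_num [Real.rpow_one, hPEsum]
  have hRHS0 : (0 : ℝ) ≤ sSup ((fun t : ℝ =>
      -Real.log (∑ e, (∑ a, P a e ^ (1 / (1 - t))) ^ (1 - t)) - t * R) ''
      Set.Icc 0 (1 / 2)) := by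
    have hmem0 := le_csSup hBdd (Set.mem_image_of_mem
      (fun t : ℝ => -Real.log (∑ e, (∑ a, P a e ^ (1 / (1 - t))) ^ (1 - t)) - t * R)
      (Set.mem_Icc.mpr ⟨le_rfl, by norm_num⟩))
    beta_reduce at hval0; rw [hval0] at hmem0
    exact hmem0
  -- main bound
  refine csSup_le ⟨_, Set.mem_image_of_mem _ (Set.mem_Icc.mpr ⟨le_rfl, zero_le_one⟩)⟩ ?_
  rintro x ⟨s, ⟨hs0, hs1⟩, rfl⟩
  simp only
  set F : ℝ := ∑ e ∈ univ.filter (fun e => 0 < ∑ a', P a' e),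
      ∑ a, P a e ^ (1 + s) * (∑ a', P a' e) ^ (-s) with hF
  have h1s : (0 : ℝ) < 1 + s := by linarith
  have hFpos : 0 < F := by
    have he0 : e0 ∈ univ.filter (fun e => 0 < ∑ a', P a' e) :=
      mem_filter.mpr ⟨mem_univ _, hPEe0⟩
    have hterm : 0 < ∑ a, P a e0 ^ (1 + s) * (∑ a', P a' e0) ^ (-s) :=
      lt_of_lt_of_le (mul_pos (Real.rpow_pos_of_pos hpos _) (Real.rpow_pos_of_pos hPEe0 _))
        (Finset.single_le_sum (fun a _ =>
          mul_nonneg (Real.rpow_nonneg (hP0 a e0) _) (Real.rpow_nonneg (hPE0 e0) _))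
          (mem_univ a0))
    exact lt_of_lt_of_le hterm (Finset.single_le_sum (fun e _ => Finset.sum_nonneg fun a _ =>
      mul_nonneg (Real.rpow_nonneg (hP0 a e) _) (Real.rpow_nonneg (hPE0 e) _)) he0)
  by_cases hcase : -Real.log F - s * R ≤ 0
  · linarith
  push_neg at hcase
  set t : ℝ := s / (1 + s) with htdef
  have ht0 : 0 ≤ t := div_nonneg hs0 h1s.le
  have ht2 : t ≤ 1 / 2 := by
    rw [htdef, div_le_div_iff₀ h1s (by norm_num : (0:ℝ) < 2)]; linarith
  have h1t : 1 - t = 1 / (1 + s) := by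
    rw [htdef]; field_simp; ring
  have h1t' : 1 / (1 - t) = 1 + s := by rw [h1t, one_div_one_div]
  set filt := univ.filter (fun e => 0 < ∑ a', P a' e) with hfilt
  -- rewrite G in terms of s
  have hGeq : ∑ e, (∑ a, P a e ^ (1 / (1 - t))) ^ (1 - t)
      = ∑ e ∈ filt, (∑ a, P a e ^ (1 + s)) ^ (1 / (1 + s)) := by
    rw [h1t', h1t]
    symm
    apply Finset.sum_subset (filter_subset _ _)
    intro e _ he
    have hPEe : ∑ a', P a' e = 0 := le_antisymm (by
      simpa [hfilt, mem_filter, not_lt] using he) (hPE0 e)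
    have hPa : ∀ a, P a e = 0 := fun a =>
      (Finset.sum_eq_zero_iff_of_nonneg (fun a _ => hP0 a e)).mp hPEe a (mem_univ a)
    simp [hPa, Real.zero_rpow h1s.ne', Real.zero_rpow (one_div_ne_zero h1s.ne'),
      Real.zero_rpow (inv_ne_zero h1s.ne')]
  have hwsum : ∑ e ∈ filt, ∑ a', P a' e = 1 := by
    rw [← hPEsum]
    apply Finset.sum_subset (filter_subset _ _)
    intro e _ he
    exact le_antisymm (by simpa [hfilt, mem_filter, not_lt] using he) (hPE0 e)
  -- Jensen / power-mean inequality
  have key : ∑ e ∈ filt, (∑ a, P a e ^ (1 + s)) ^ (1 / (1 + s)) ≤ F ^ (1 / (1 + s)) := by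
    have hXnn : ∀ e, 0 ≤ (∑ a, P a e ^ (1 + s)) * (∑ a', P a' e) ^ (-(1 + s)) := fun e =>
      mul_nonneg (Finset.sum_nonneg fun a _ => Real.rpow_nonneg (hP0 a e) _)
        (Real.rpow_nonneg (hPE0 e) _)
    have hmain := Real.arith_mean_le_rpow_mean filt (fun e => ∑ a', P a' e)
      (fun e => ((∑ a, P a e ^ (1 + s)) * (∑ a', P a' e) ^ (-(1 + s))) ^ (1 / (1 + s)))
      (fun e _ => hPE0 e) hwsum
      (fun e _ => Real.rpow_nonneg (hXnn e) _)
      (by linarith : (1:ℝ) ≤ 1 + s)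
    have hL : ∀ e ∈ filt,
        (∑ a', P a' e) * ((∑ a, P a e ^ (1 + s)) * (∑ a', P a' e) ^ (-(1 + s))) ^ (1 / (1 + s))
          = (∑ a, P a e ^ (1 + s)) ^ (1 / (1 + s)) := by
      intro e he
      have hPEe : 0 < ∑ a', P a' e := (mem_filter.mp he).2
      rw [Real.mul_rpow (Finset.sum_nonneg fun a _ => Real.rpow_nonneg (hP0 a e) _)
        (Real.rpow_nonneg (hPE0 e) _), ← Real.rpow_mul (hPE0 e)]
      have : -(1 + s) * (1 / (1 + s)) = -1 := by field_simp
      rw [this, Real.rpow_neg_one]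
      field_simp
    have hRt : ∀ e ∈ filt,
        (∑ a', P a' e) *
          (((∑ a, P a e ^ (1 + s)) * (∑ a', P a' e) ^ (-(1 + s))) ^ (1 / (1 + s))) ^ (1 + s)
          = ∑ a, P a e ^ (1 + s) * (∑ a', P a' e) ^ (-s) := by
      intro e he
      have hPEe : 0 < ∑ a', P a' e := (mem_filter.mp he).2
      rw [← Real.rpow_mul (hXnn e), one_div_mul_cancel h1s.ne', Real.rpow_one]
      have hpe : (∑ a', P a' e) * (∑ a', P a' e) ^ (-(1 + s)) = (∑ a', P a' e) ^ (-s) := by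
        calc (∑ a', P a' e) * (∑ a', P a' e) ^ (-(1 + s))
            = (∑ a', P a' e) ^ (1:ℝ) * (∑ a', P a' e) ^ (-(1 + s)) := by rw [Real.rpow_one]
          _ = (∑ a', P a' e) ^ ((1:ℝ) + -(1 + s)) := (Real.rpow_add hPEe _ _).symm
          _ = (∑ a', P a' e) ^ (-s) := by norm_num
      rw [← Finset.sum_mul, ← hpe]
      ring

    calc ∑ e ∈ filt, (∑ a, P a e ^ (1 + s)) ^ (1 / (1 + s))
        = ∑ e ∈ filt, (∑ a', P a' e) *
            ((∑ a, P a e ^ (1 + s)) * (∑ a', P a' e) ^ (-(1 + s))) ^ (1 / (1 + s)) :=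
          (Finset.sum_congr rfl hL).symm
      _ ≤ (∑ e ∈ filt, (∑ a', P a' e) *
            (((∑ a, P a e ^ (1 + s)) * (∑ a', P a' e) ^ (-(1 + s))) ^ (1 / (1 + s))) ^ (1 + s))
            ^ (1 / (1 + s)) := hmain
      _ = F ^ (1 / (1 + s)) := by rw [Finset.sum_congr rfl hRt]
  have hGpos : 0 < ∑ e, (∑ a, P a e ^ (1 / (1 - t))) ^ (1 - t) :=
    lt_of_lt_of_le hpos (hG_lb t ht0 ht2)
  have hlog : Real.log (∑ e, (∑ a, P a e ^ (1 / (1 - t))) ^ (1 - t))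
      ≤ 1 / (1 + s) * Real.log F := by
    rw [← Real.log_rpow hFpos]
    exact Real.log_le_log hGpos (hGeq ▸ key)
  have step1 : (-Real.log F - s * R) / 2 ≤ (-Real.log F - s * R) / (1 + s) := by
    rw [div_le_div_iff₀ (by norm_num : (0:ℝ) < 2) h1s]
    nlinarith
  have step2 : (-Real.log F - s * R) / (1 + s)
      = -(1 / (1 + s) * Real.log F) - t * R := by
    rw [htdef]; field_simp
  have step3 : -(1 / (1 + s) * Real.log F) - t * R
      ≤ -Real.log (∑ e, (∑ a, P a e ^ (1 / (1 - t))) ^ (1 - t)) - t * R := by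
    linarith
  have hmem : -Real.log (∑ e, (∑ a, P a e ^ (1 / (1 - t))) ^ (1 - t)) - t * R
      ≤ sSup ((fun t : ℝ =>
        -Real.log (∑ e, (∑ a, P a e ^ (1 / (1 - t))) ^ (1 - t)) - t * R) ''
        Set.Icc 0 (1 / 2)) :=
    le_csSup hBdd (Set.mem_image_of_mem _ ⟨ht0, ht2⟩)
  linarith
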